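/- The partition function satisfies the pentagonal number recurrence: for all n ≥ 1, p(n) = Σ_{k=1}^{n} (-1)^{k+1} ( p(n - k(3k-1)/2) + p(n - k(3k+1)/2) ), with p(m)=0 for m<0 and p(0)=1. -/

import Mathlib

open Finset ArithmeticFunction

/-- Euler's partition function `p(n)`. -/
def eulerP (n : ℕ) : ℤ := Fintype.card (Nat.Partition n)

/-- `p` extended to the integers by `p(m) = 0` for `m < 0`. -/
def pz (m : ℤ) : ℤ := if m < 0 then 0 else eulerP m.toNat

namespace Pent


def pent (j : ℤ) : ℤ := j * (3 * j + 1) / 2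

lemma two_dvd (j : ℤ) : 2 ∣ j * (3 * j + 1) := by
  rcases Int.even_or_odd j with ⟨m, hm⟩ | ⟨m, hm⟩
  · exact ⟨m * (3 * j + 1), by subst hm; ring⟩
  · exact ⟨j * (3 * m + 2), by subst hm; ring⟩

lemma two_pent (j : ℤ) : 2 * pent j = j * (3 * j + 1) :=
  Int.mul_ediv_cancel' (two_dvd j)

lemma pent_succ (j : ℤ) : pent (j + 1) = pent j + 3 * j + 2 := by
  have h1 := two_pent j
  have h2 := two_pent (j + 1)
  have h3 : (j + 1) * (3 * (j + 1) + 1) = j * (3 * j + 1) + (6 * j + 4) := by ring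
  omega

lemma pent_nonneg (j : ℤ) : 0 ≤ pent j := by
  have h := two_pent j
  rcases le_or_gt 0 j with hj | hj
  · nlinarith [mul_nonneg hj (by linarith : (0:ℤ) ≤ 3 * j + 1)]
  · have hj' : j ≤ -1 := by omega
    nlinarith [mul_nonneg (by linarith : (0:ℤ) ≤ -j) (by linarith : (0:ℤ) ≤ -(3 * j + 1))]

lemma abs_le_pent (j : ℤ) : |j| ≤ pent j := by
  have h := two_pent j
  rcases lt_trichotomy j 0 with hj | hj | hj
  · have hj' : j ≤ -1 := by omega
    rw [abs_of_neg hj]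
    nlinarith [mul_nonneg (by linarith : (0:ℤ) ≤ -j) (by linarith : (0:ℤ) ≤ -(j + 1))]
  · subst hj; simp [pent]
  · have hj' : 1 ≤ j := hj
    rw [abs_of_pos hj]
    nlinarith [mul_nonneg (by linarith : (0:ℤ) ≤ j) (by linarith : (0:ℤ) ≤ j - 1)]

lemma pent_zero : pent 0 = 0 := rfl

/-! list lemmas -/

lemma sum_filter_pos (l : List ℕ) : (l.filter (fun x => 0 < x)).sum = l.sum := by
  induction l with
  | nil => rfl
  | cons a s ih =>
    by_cases ha : 0 < a
    · simp [List.filter_cons, ha, ih]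
    · have : a = 0 := by omega
      subst this
      simpa [List.filter_cons] using ih

lemma sum_map_pred (l : List ℕ) (h : ∀ x ∈ l, 0 < x) :
    (l.map (fun x => x - 1)).sum + l.length = l.sum := by
  induction l with
  | nil => simp
  | cons a s ih =>
    have ha : 0 < a := h a (by simp)
    have ihs := ih (fun x hx => h x (by simp [hx]))
    simp only [List.map_cons, List.sum_cons, List.length_cons]
    omega

lemma sum_map_succ (l : List ℕ) : (l.map (· + 1)).sum = l.sum + l.length := by
  induction l with
  | nil => rfl
  | cons a s ih =>
    simp only [List.map_cons, List.sum_cons, List.length_cons, ih]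
    omega

lemma le_headD (l : List ℕ) (hs : l.Pairwise (· ≥ ·)) {x : ℕ} (hx : x ∈ l) :
    x ≤ l.headD 0 := by
  cases l with
  | nil => simp at hx
  | cons a s =>
    rcases List.mem_cons.mp hx with rfl | hx
    · simp
    · exact (List.pairwise_cons.mp hs).1 x hx

lemma sorted_map_pred {l : List ℕ} (hs : l.Pairwise (· ≥ ·)) :
    (l.map (· - 1)).Pairwise (· ≥ ·) :=
  List.Pairwise.map _ (fun _ _ h => Nat.sub_le_sub_right h 1) hs

lemma sorted_filter {l : List ℕ} (p : ℕ → Bool) (hs : l.Pairwise (· ≥ ·)) :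
    (l.filter p).Pairwise (· ≥ ·) :=
  hs.sublist (List.filter_sublist (l := l))

lemma sorted_replicate (m a : ℕ) : (List.replicate m a).Pairwise (· ≥ ·) :=
  List.pairwise_replicate.mpr (Or.inr le_rfl)

lemma sorted_append_ones {l : List ℕ} (hs : l.Pairwise (· ≥ ·))
    (hp : ∀ x ∈ l, 0 < x) (m : ℕ) :
    (l ++ List.replicate m 1).Pairwise (· ≥ ·) := by
  induction l with
  | nil => simpa using sorted_replicate m 1
  | cons a s ih =>
    rw [List.cons_append, List.pairwise_cons]
    refine ⟨fun b hb => ?_, ih (List.pairwise_cons.mp hs).2 (fun x hx => hp x (by simp [hx]))⟩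
    rcases List.mem_append.mp hb with hb | hb
    · exact (List.pairwise_cons.mp hs).1 b hb
    · have := List.eq_of_mem_replicate hb
      subst this
      exact hp a (by simp)

lemma split_ones (l : List ℕ) (hs : l.Pairwise (· ≥ ·)) (hp : ∀ x ∈ l, 0 < x) :
    l = l.filter (fun x => 2 ≤ x) ++
      List.replicate (l.length - (l.filter (fun x => 2 ≤ x)).length) 1 := by
  induction l with
  | nil => rfl
  | cons a s ih =>
    rcases List.pairwise_cons.mp hs with ⟨ha, hss⟩
    by_cases h2 : 2 ≤ a
    · have hrec := ih hss (fun x hx => hp x (by simp [hx]))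
      rw [List.filter_cons_of_pos (by simpa using h2)]
      simp only [List.length_cons, List.cons_append]
      rw [show (s.length + 1) - ((s.filter (fun x => 2 ≤ x)).length + 1)
            = s.length - (s.filter (fun x => 2 ≤ x)).length from by
        have : (s.filter (fun x => 2 ≤ x)).length ≤ s.length := List.length_filter_le _ _
        omega]
      exact congrArg (a :: ·) hrec
    · have ha1 : a = 1 := by have := hp a (by simp); omega
      have hall : ∀ x ∈ a :: s, x = 1 := by
        intro x hx
        rcases List.mem_cons.mp hx with rfl | hx
        · exact ha1
        · have := ha x hx; have := hp x (by simp [hx]); omega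
      have hfil : (a :: s).filter (fun x => 2 ≤ x) = [] := by
        rw [List.filter_eq_nil_iff]
        intro x hx
        simp [hall x hx]
      rw [hfil]
      simpa [hfil] using List.eq_replicate_of_mem hall

/-! the involution -/



def condA (j : ℤ) (l : List ℕ) : Prop :=
  (l.headD 0 : ℤ) ≤ (l.length : ℤ) + 3 * j

instance (j : ℤ) (l : List ℕ) : Decidable (condA j l) :=
  inferInstanceAs (Decidable (_ ≤ _))

def stepA (j : ℤ) (l : List ℕ) : ℤ × List ℕ :=
  (j - 1, (((l.length : ℤ) + 3 * j - 1).toNat :: l.map (fun x => x - 1)).filter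
    (fun x => 0 < x))

def stepB (j : ℤ) (l : List ℕ) : ℤ × List ℕ :=
  match l with
  | [] => (j + 1, List.replicate (-3 * j - 2).toNat 1)
  | a :: s => (j + 1,
      s.map (fun x => x + 1) ++
        List.replicate ((a : ℤ) - 3 * j - (s.length : ℤ) - 2).toNat 1)

def G (j : ℤ) (l : List ℕ) : ℤ × List ℕ :=
  if condA j l then stepA j l else stepB j l

def Valid (n : ℕ) (j : ℤ) (l : List ℕ) : Prop :=
  l.Pairwise (· ≥ ·) ∧ (∀ x ∈ l, 0 < x) ∧ (l.sum : ℤ) + pent j = n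

lemma stepA_top_nonneg {n : ℕ} {j : ℤ} {l : List ℕ} (hn : 1 ≤ n)
    (h : Valid n j l) (hA : condA j l) : 1 ≤ (l.length : ℤ) + 3 * j := by
  obtain ⟨hs, hp, hsum⟩ := h
  cases l with
  | nil =>
    simp only [condA, List.headD_nil, List.length_nil, Nat.cast_zero, zero_add] at hA
    have hj : 0 ≤ j := by omega
    have hj0 : j ≠ 0 := by
      rintro rfl
      simp [pent] at hsum
      omega
    have h1 : 1 ≤ j := by omega
    simp only [List.length_nil, Nat.cast_zero, zero_add]
    omega
  | cons a s =>
    have ha : 0 < a := hp a (by simp)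
    simp only [condA, List.headD_cons] at hA
    omega

lemma stepA_valid {n : ℕ} {j : ℤ} {l : List ℕ} (hn : 1 ≤ n)
    (h : Valid n j l) (hA : condA j l) : Valid n (j - 1) (stepA j l).2 := by
  obtain ⟨hs, hp, hsum⟩ := h
  have hb := stepA_top_nonneg hn ⟨hs, hp, hsum⟩ hA
  refine ⟨?_, ?_, ?_⟩
  · -- sorted
    apply sorted_filter
    rw [List.pairwise_cons]
    refine ⟨fun b hb' => ?_, sorted_map_pred hs⟩
    obtain ⟨y, hy, rfl⟩ := List.mem_map.mp hb'
    have h1 : y ≤ l.headD 0 := le_headD l hs hy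
    have h2 : (l.headD 0 : ℤ) ≤ (l.length : ℤ) + 3 * j := hA
    omega
  · intro x hx
    have := List.of_mem_filter hx
    simpa using this
  · -- sum
    have e1 := sum_filter_pos
      ((((l.length : ℤ) + 3 * j - 1).toNat :: l.map (fun x => x - 1)))
    have e2 := sum_map_pred l hp
    have hp' := pent_succ (j - 1)
    rw [sub_add_cancel] at hp'
    simp only [stepA]
    rw [e1]
    simp only [List.sum_cons, Nat.cast_add]
    omega

lemma stepB_valid {n : ℕ} {j : ℤ} {l : List ℕ}
    (h : Valid n j l) (hB : ¬ condA j l) : Valid n (j + 1) (stepB j l).2 := by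
  obtain ⟨hs, hp, hsum⟩ := h
  have hp' := pent_succ j
  cases l with
  | nil =>
    simp only [condA, List.headD_nil, List.length_nil, Nat.cast_zero, zero_add,
      not_le] at hB
    have hj : j ≤ -1 := by omega
    refine ⟨sorted_replicate _ _, ?_, ?_⟩
    · intro x hx
      have := List.eq_of_mem_replicate hx
      omega
    · simp only [stepB, List.sum_replicate, smul_eq_mul, mul_one]
      simp only [List.sum_nil, Nat.cast_zero, zero_add] at hsum
      omega
  | cons a s =>
    simp only [condA, List.headD_cons, List.length_cons, not_le] at hB
    rcases List.pairwise_cons.mp hs with ⟨has, hss⟩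
    have hm : 0 ≤ (a : ℤ) - 3 * j - (s.length : ℤ) - 2 := by push_cast at hB; omega
    refine ⟨?_, ?_, ?_⟩
    · apply sorted_append_ones
      · exact List.Pairwise.map _ (fun _ _ h => Nat.add_le_add_right h 1) hss
      · intro x hx
        obtain ⟨y, _, rfl⟩ := List.mem_map.mp hx
        omega
    · intro x hx
      rcases List.mem_append.mp hx with hx | hx
      · obtain ⟨y, _, rfl⟩ := List.mem_map.mp hx
        omega
      · have := List.eq_of_mem_replicate hx
        omega
    · simp only [stepB, List.sum_append, List.sum_replicate, smul_eq_mul, mul_one,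
        sum_map_succ]
      simp only [List.sum_cons, Nat.cast_add] at hsum ⊢
      omega

lemma BA {n : ℕ} {j : ℤ} {l : List ℕ}
    (h : Valid n j l) (hB : ¬ condA j l) :
    condA (j + 1) (stepB j l).2 ∧ stepA (j + 1) (stepB j l).2 = (j, l) := by
  obtain ⟨hs, hp, hsum⟩ := h
  cases l with
  | nil =>
    simp only [condA, List.headD_nil, List.length_nil, Nat.cast_zero, zero_add,
      not_le] at hB
    have hj : j ≤ -1 := by omega
    have hm1 : 1 ≤ (-3 * j - 2).toNat := by omega
    have hh : (List.replicate (-3 * j - 2).toNat 1).headD 0 = 1 := by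
      obtain ⟨k, hk⟩ : ∃ k, (-3 * j - 2).toNat = k + 1 :=
        ⟨(-3 * j - 2).toNat - 1, by omega⟩
      rw [hk, List.replicate_succ, List.headD_cons]
    constructor
    · simp only [stepB, condA, hh, List.length_replicate]
      omega
    · simp only [stepA, stepB, Prod.mk.injEq, List.length_replicate,
        List.map_replicate]
      refine ⟨by omega, ?_⟩
      have hz : ((((-3 * j - 2).toNat : ℕ) : ℤ) + 3 * (j + 1) - 1).toNat = 0 := by
        omega
      rw [hz, List.filter_eq_nil_iff]
      intro x hx
      rcases List.mem_cons.mp hx with rfl | hx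
      · simp
      · have := List.eq_of_mem_replicate hx
        simp [this]
  | cons a s =>
    simp only [condA, List.headD_cons, List.length_cons, not_le] at hB
    push_cast at hB
    rcases List.pairwise_cons.mp hs with ⟨has, hss⟩
    have ha : 0 < a := hp a (by simp)
    have hm : 0 ≤ (a : ℤ) - 3 * j - (s.length : ℤ) - 2 := by omega
    set m : ℕ := ((a : ℤ) - 3 * j - (s.length : ℤ) - 2).toNat with hmdef
    have hmz : (m : ℤ) = (a : ℤ) - 3 * j - (s.length : ℤ) - 2 := by omega
    have hlen : ((s.map (fun x => x + 1) ++ List.replicate m 1).length : ℤ)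
        = (a : ℤ) - 3 * j - 2 := by
      rw [List.length_append, List.length_map, List.length_replicate]
      push_cast
      omega
    have hhead : ((s.map (fun x => x + 1) ++ List.replicate m 1).headD 0 : ℤ)
        ≤ (a : ℤ) + 1 := by
      cases s with
      | nil =>
        simp only [List.map_nil, List.nil_append]
        cases hm' : m with
        | zero => simp; omega
        | succ k =>
          rw [List.replicate_succ, List.headD_cons]
          omega
      | cons b s' =>
        have hba : b ≤ a := has b (by simp)
        simp only [List.map_cons, List.cons_append, List.headD_cons]
        push_cast
        omega
    constructor
    · simp only [stepB, condA]
      rw [← hmdef, hlen]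
      omega
    · simp only [stepA, stepB, Prod.mk.injEq]
      rw [← hmdef]
      refine ⟨by omega, ?_⟩
      have htop : ((((s.map (fun x => x + 1) ++ List.replicate m 1).length : ℕ) : ℤ)
          + 3 * (j + 1) - 1).toNat = a := by omega
      rw [htop]
      rw [List.filter_cons_of_pos (by simpa using ha)]
      congr 1
      rw [List.map_append, List.map_map]
      have h1 : s.map ((fun x => x - 1) ∘ (fun x => x + 1)) = s := by
        have hc : ((fun x => x - 1) ∘ (fun x => x + 1) : ℕ → ℕ) = _root_.id :=
          funext fun x => rfl
        rw [hc, List.map_id]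
      rw [h1, List.map_replicate, List.filter_append]
      have h2 : s.filter (fun x => 0 < x) = s :=
        List.filter_eq_self.mpr (fun x hx => by simpa using hp x (by simp [hx]))
      have h3 : (List.replicate m (1 - 1)).filter (fun x => 0 < x) = [] := by
        rw [List.filter_eq_nil_iff]
        intro x hx
        have := List.eq_of_mem_replicate hx
        simp [this]
      rw [h2, h3, List.append_nil]

lemma AB {n : ℕ} {j : ℤ} {l : List ℕ} (hn : 1 ≤ n)
    (h : Valid n j l) (hA : condA j l) :
    ¬ condA (j - 1) (stepA j l).2 ∧ stepB (j - 1) (stepA j l).2 = (j, l) := by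
  obtain ⟨hs, hp, hsum⟩ := h
  have hb := stepA_top_nonneg hn ⟨hs, hp, hsum⟩ hA
  obtain ⟨b, hbdef⟩ : ∃ b : ℕ, b = ((l.length : ℤ) + 3 * j - 1).toNat := ⟨_, rfl⟩
  have hbz : (b : ℤ) = (l.length : ℤ) + 3 * j - 1 := by omega
  by_cases hb0 : b = 0
  · -- all parts are 1, stepA output is empty
    have hone : ∀ x ∈ l, x = 1 := by
      intro x hx
      have h1 : x ≤ l.headD 0 := le_headD l hs hx
      have h2 : (l.headD 0 : ℤ) ≤ (l.length : ℤ) + 3 * j := hA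
      have h3 : 0 < x := hp x hx
      omega
    have hrep : l = List.replicate l.length 1 := List.eq_replicate_of_mem hone
    have hfil : (stepA j l).2 = [] := by
      simp only [stepA, ← hbdef]
      rw [List.filter_eq_nil_iff]
      intro x hx
      rcases List.mem_cons.mp hx with rfl | hx
      · simp [hb0]
      · obtain ⟨y, hy, rfl⟩ := List.mem_map.mp hx
        simp [hone y hy]
    constructor
    · show ¬ condA _ (stepA j l).2
      rw [hfil]
      simp only [condA, List.headD_nil, List.length_nil, Nat.cast_zero, zero_add,
        not_le]
      omega
    · show stepB _ (stepA j l).2 = _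
      rw [hfil]
      simp only [stepB, Prod.mk.injEq]
      refine ⟨by omega, ?_⟩
      rw [hrep]
      have hlen : (-3 * (j - 1) - 2).toNat = l.length := by omega
      rw [hlen]
  · -- b ≥ 1
    have hbpos : 0 < b := Nat.pos_of_ne_zero hb0
    obtain ⟨r, hrdef⟩ :
        ∃ r : List ℕ, r = ((l.map (fun x => x - 1)).filter (fun x => 0 < x)) :=
      ⟨_, rfl⟩
    have hfil : (stepA j l).2 = b :: r := by
      simp only [stepA, ← hbdef]
      rw [List.filter_cons_of_pos (by simpa using hbpos), ← hrdef]
    have hr2 : r = (l.filter (fun x => 2 ≤ x)).map (fun x => x - 1) := by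
      rw [hrdef, List.filter_map]
      congr 1
      apply List.filter_congr
      intro x hx
      have := hp x hx
      simp only [Function.comp]
      rw [decide_eq_decide]
      omega
    have hrlen : r.length = (l.filter (fun x => 2 ≤ x)).length := by
      rw [hr2, List.length_map]
    have hrle : r.length ≤ l.length := by
      rw [hrlen]
      exact List.length_filter_le _ _
    constructor
    · show ¬ condA _ (stepA j l).2
      rw [hfil]
      simp only [condA, List.headD_cons, List.length_cons, not_le]
      push_cast
      omega
    · show stepB _ (stepA j l).2 = _
      rw [hfil]
      simp only [stepB, Prod.mk.injEq]
      refine ⟨by omega, ?_⟩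
      have hmap : r.map (fun x => x + 1) = l.filter (fun x => 2 ≤ x) := by
        rw [hr2, List.map_map]
        have : ∀ x ∈ l.filter (fun x => 2 ≤ x),
            ((fun x => x + 1) ∘ (fun x => x - 1)) x = _root_.id x := by
          intro x hx
          have h2x : 2 ≤ x := by simpa using List.of_mem_filter hx
          simp only [Function.comp, _root_.id]
          omega
        rw [List.map_congr_left this, List.map_id]
      have hcnt : ((b : ℤ) - 3 * (j - 1) - (r.length : ℤ) - 2).toNat
          = l.length - (l.filter (fun x => 2 ≤ x)).length := by
        have := List.length_filter_le (fun x => decide (2 ≤ x)) l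
        clear hfil hbdef hmap hrdef hr2
        omega
      rw [hmap, hcnt]
      exact (split_ones l hs hp).symm

lemma stepB_fst (j : ℤ) (l : List ℕ) : (stepB j l).1 = j + 1 := by
  cases l <;> rfl

lemma G_valid {n : ℕ} {j : ℤ} {l : List ℕ} (hn : 1 ≤ n) (h : Valid n j l) :
    Valid n (G j l).1 (G j l).2 := by
  unfold G
  split
  · exact stepA_valid hn h ‹_›
  · rw [stepB_fst]
    exact stepB_valid h ‹_›

lemma G_G {n : ℕ} {j : ℤ} {l : List ℕ} (hn : 1 ≤ n) (h : Valid n j l) :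
    G (G j l).1 (G j l).2 = (j, l) := by
  by_cases hA : condA j l
  · have hab := AB hn h hA
    have h1 : G j l = stepA j l := if_pos hA
    rw [h1]
    have h2 : G (stepA j l).1 (stepA j l).2 = stepB (stepA j l).1 (stepA j l).2 :=
      if_neg hab.1
    rw [h2]
    exact hab.2
  · have hba := BA h hA
    have h1 : G j l = stepB j l := if_neg hA
    rw [h1, stepB_fst]
    have h2 : G (j + 1) (stepB j l).2 = stepA (j + 1) (stepB j l).2 :=
      if_pos hba.1
    rw [h2]
    exact hba.2

lemma G_fst (j : ℤ) (l : List ℕ) : (G j l).1 = j - 1 ∨ (G j l).1 = j + 1 := by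
  unfold G
  split
  · exact Or.inl rfl
  · exact Or.inr (stepB_fst _ _)

lemma neg_one_flip {j k : ℤ} (h : k = j - 1 ∨ k = j + 1) :
    (-1:ℤ) ^ k.natAbs = -(-1:ℤ) ^ j.natAbs := by
  have hpar : Even k.natAbs ↔ ¬ Even j.natAbs := by
    rw [Int.natAbs_even, Int.natAbs_even, Int.even_iff, Int.even_iff]
    omega
  rcases Nat.even_or_odd j.natAbs with he | ho
  · have hk : Odd k.natAbs := Nat.not_even_iff_odd.mp (fun hc => hpar.mp hc he)
    rw [he.neg_one_pow, hk.neg_one_pow]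
  · have hk : Even k.natAbs := hpar.mpr (Nat.not_even_iff_odd.mpr ho)
    rw [hk.neg_one_pow, ho.neg_one_pow]
    norm_num

/-! partitions as sorted lists -/

def SL (m : ℕ) : Type :=
  {l : List ℕ // l.Pairwise (· ≥ ·) ∧ (∀ x ∈ l, 0 < x) ∧ l.sum = m}

instance (m : ℕ) : DecidableEq (SL m) := Subtype.instDecidableEq

def partitionEquiv (m : ℕ) : Nat.Partition m ≃ SL m where
  toFun π := ⟨π.parts.sort (· ≥ ·), Multiset.pairwise_sort _ _,
    fun x hx => π.parts_pos ((Multiset.mem_sort _).mp hx), by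
      have h1 : ((π.parts.sort (· ≥ ·) : List ℕ) : Multiset ℕ) = π.parts :=
        Multiset.sort_eq _ _
      have h2 := Multiset.sum_coe (π.parts.sort (· ≥ ·))
      rw [h1] at h2
      rw [← h2, π.parts_sum]⟩
  invFun l := ⟨(l.1 : Multiset ℕ), fun {x} hx => l.2.2.1 x (by simpa using hx),
    by simpa using l.2.2.2⟩
  left_inv π := Nat.Partition.ext (Multiset.sort_eq _ _)
  right_inv l := by
    apply Subtype.ext
    dsimp only
    apply List.Perm.eq_of_pairwise' (Multiset.pairwise_sort _ _) l.2.1 ?_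
    exact Multiset.coe_eq_coe.mp (Multiset.sort_eq _ _)

instance (m : ℕ) : Fintype (SL m) := Fintype.ofEquiv _ (partitionEquiv m)


abbrev XT (n : ℕ) : Type := (j : ℤ) × SL (((n : ℤ) - pent j).toNat)

instance (n : ℕ) : DecidableEq (XT n) := by unfold XT; infer_instance

noncomputable def SS (n : ℕ) : Finset (XT n) :=
  ((Icc (-(n:ℤ)) n).filter (fun j => pent j ≤ n)).sigma (fun _ => Finset.univ)

lemma valid_of_mem {n : ℕ} {x : XT n} (hx : x ∈ SS n) : Valid n x.1 x.2.1 := by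
  rw [SS, Finset.mem_sigma] at hx
  have hpj : pent x.1 ≤ (n:ℤ) := (Finset.mem_filter.mp hx.1).2
  have hsum := x.2.2.2.2
  exact ⟨x.2.2.1, x.2.2.2.1, by omega⟩

lemma mem_of_valid {n : ℕ} {x : XT n} (hv : Valid n x.1 x.2.1) : x ∈ SS n := by
  rw [SS, Finset.mem_sigma]
  obtain ⟨-, -, hsum⟩ := hv
  have hnn : (0:ℤ) ≤ (x.2.1.sum : ℤ) := by positivity
  have hpj : pent x.1 ≤ (n:ℤ) := by omega
  have habs := abs_le.mp ((abs_le_pent x.1).trans hpj)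
  refine ⟨Finset.mem_filter.mpr ⟨Finset.mem_Icc.mpr ⟨habs.1, habs.2⟩, hpj⟩,
    Finset.mem_univ _⟩

def gg (n : ℕ) (hn : 1 ≤ n) (x : XT n) (hv : Valid n x.1 x.2.1) : XT n :=
  ⟨(G x.1 x.2.1).1, ⟨(G x.1 x.2.1).2, by
    obtain ⟨h1, h2, h3⟩ := G_valid hn hv
    exact ⟨h1, h2, by omega⟩⟩⟩

lemma XT_ext {n : ℕ} {x y : XT n} (h1 : x.1 = y.1) (h2 : x.2.1 = y.2.1) :
    x = y := by
  obtain ⟨j, l, hl⟩ := x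
  obtain ⟨j', l', hl'⟩ := y
  dsimp only at h1 h2
  subst h1
  exact congrArg (Sigma.mk j) (Subtype.ext h2)

lemma key (n : ℕ) (hn : 1 ≤ n) :
    ∑ j ∈ Icc (-(n:ℤ)) (n:ℤ), (-1:ℤ) ^ j.natAbs * pz ((n:ℤ) - pent j) = 0 := by
  have hfil : ∑ j ∈ Icc (-(n:ℤ)) (n:ℤ), (-1:ℤ) ^ j.natAbs * pz ((n:ℤ) - pent j)
      = ∑ j ∈ (Icc (-(n:ℤ)) (n:ℤ)).filter (fun j => pent j ≤ (n:ℤ)),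
          (-1:ℤ) ^ j.natAbs * pz ((n:ℤ) - pent j) := by
    refine (Finset.sum_filter_of_ne ?_).symm
    intro j _ hne
    by_contra hc
    apply hne
    have : (n:ℤ) - pent j < 0 := by omega
    rw [pz, if_pos this, mul_zero]
  rw [hfil]
  have hcard : ∀ j ∈ (Icc (-(n:ℤ)) (n:ℤ)).filter (fun j => pent j ≤ (n:ℤ)),
      (-1:ℤ) ^ j.natAbs * pz ((n:ℤ) - pent j)
        = (Fintype.card (SL (((n:ℤ) - pent j).toNat))) • (-1:ℤ) ^ j.natAbs := by
    intro j hj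
    have hpj : pent j ≤ (n:ℤ) := (Finset.mem_filter.mp hj).2
    rw [pz, if_neg (by omega), eulerP,
      Fintype.card_congr (partitionEquiv (((n:ℤ) - pent j).toNat))]
    rw [nsmul_eq_mul, mul_comm]
  rw [Finset.sum_congr rfl hcard]
  have hsig : ∑ x ∈ SS n, (-1:ℤ) ^ x.1.natAbs
      = ∑ j ∈ (Icc (-(n:ℤ)) (n:ℤ)).filter (fun j => pent j ≤ (n:ℤ)),
        (Fintype.card (SL (((n:ℤ) - pent j).toNat))) • (-1:ℤ) ^ j.natAbs := by
    rw [SS]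
    rw [Finset.sum_sigma]
    exact Finset.sum_congr rfl (fun j hj => by
      dsimp only
      rw [Finset.sum_const, Finset.card_univ])
  rw [← hsig]
  refine Finset.sum_involution (fun x hx => gg n hn x (valid_of_mem hx))
    ?_ ?_ ?_ ?_
  · intro a ha
    show (-1:ℤ) ^ a.1.natAbs + (-1:ℤ) ^ (G a.1 a.2.1).1.natAbs = 0
    rw [neg_one_flip (G_fst a.1 a.2.1)]
    ring
  · intro a ha _ heq
    have h1 := congrArg Sigma.fst heq
    have h2 := G_fst a.1 a.2.1
    simp only [gg] at h1
    omega
  · intro a ha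
    exact mem_of_valid (G_valid hn (valid_of_mem ha))
  · intro a ha
    have hGG := G_G hn (valid_of_mem ha)
    exact XT_ext (congrArg Prod.fst hGG) (congrArg Prod.snd hGG)

end Pent

theorem stmt17 (n : ℕ) (hn : 1 ≤ n) :
    eulerP n =
      ∑ k ∈ Finset.Icc 1 n,
        (-1 : ℤ) ^ (k + 1) *
          (pz ((n : ℤ) - k * (3 * k - 1) / 2) + pz ((n : ℤ) - k * (3 * k + 1) / 2)) := by
  classical
  have hkey := Pent.key n hn
  set A := (Finset.Icc 1 n).image (fun k : ℕ => -(k : ℤ)) with hA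
  set C := (Finset.Icc 1 n).image (fun k : ℕ => (k : ℤ)) with hC
  have hU : Finset.Icc (-(n:ℤ)) (n:ℤ) = (A ∪ {(0:ℤ)}) ∪ C := by
    ext j
    simp only [Finset.mem_Icc, Finset.mem_union, Finset.mem_singleton, hA, hC,
      Finset.mem_image]
    constructor
    · intro hj
      rcases lt_trichotomy j 0 with h0 | h0 | h0
      · exact Or.inl (Or.inl ⟨(-j).toNat, by omega, by omega⟩)
      · exact Or.inl (Or.inr h0)
      · exact Or.inr ⟨j.toNat, by omega, by omega⟩
    · rintro ((⟨k, hk, rfl⟩ | rfl) | ⟨k, hk, rfl⟩)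
      · omega
      · omega
      · omega
  have hd2 : Disjoint A ({(0:ℤ)} : Finset ℤ) := by
    rw [Finset.disjoint_left]
    intro a ha ha0
    simp only [hA, Finset.mem_image, Finset.mem_Icc] at ha
    simp only [Finset.mem_singleton] at ha0
    obtain ⟨k, hk, rfl⟩ := ha
    omega
  have hd1 : Disjoint (A ∪ {(0:ℤ)}) C := by
    rw [Finset.disjoint_left]
    intro a ha haC
    simp only [hC, Finset.mem_image, Finset.mem_Icc] at haC
    simp only [hA, Finset.mem_union, Finset.mem_singleton, Finset.mem_image,
      Finset.mem_Icc] at ha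
    obtain ⟨k, hk, rfl⟩ := haC
    rcases ha with ⟨m, hm, hma⟩ | h0 <;> omega
  rw [hU, Finset.sum_union hd1, Finset.sum_union hd2, Finset.sum_singleton]
    at hkey
  have hsA : ∑ j ∈ A, (-1:ℤ)^j.natAbs * pz ((n:ℤ) - Pent.pent j)
      = ∑ k ∈ Finset.Icc 1 n,
          (-1:ℤ)^k * pz ((n:ℤ) - (k:ℤ) * (3*(k:ℤ)-1)/2) := by
    rw [hA, Finset.sum_image (by intro x hx y hy h; beta_reduce at h; omega)]
    refine Finset.sum_congr rfl (fun k hk => ?_)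
    have h1 : (-(k:ℤ)).natAbs = k := by simp
    have h2 : Pent.pent (-(k:ℤ)) = (k:ℤ) * (3*(k:ℤ)-1)/2 := by
      unfold Pent.pent
      congr 1
      ring
    rw [h1, h2]
  have hsC : ∑ j ∈ C, (-1:ℤ)^j.natAbs * pz ((n:ℤ) - Pent.pent j)
      = ∑ k ∈ Finset.Icc 1 n,
          (-1:ℤ)^k * pz ((n:ℤ) - (k:ℤ) * (3*(k:ℤ)+1)/2) := by
    rw [hC, Finset.sum_image (by intro x hx y hy h; beta_reduce at h; omega)]
    refine Finset.sum_congr rfl (fun k hk => ?_)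
    have h1 : ((k:ℤ)).natAbs = k := by simp
    have h2 : Pent.pent ((k:ℤ)) = (k:ℤ) * (3*(k:ℤ)+1)/2 := rfl
    rw [h1, h2]
  have h0 : (-1:ℤ)^(0:ℤ).natAbs * pz ((n:ℤ) - Pent.pent 0) = eulerP n := by
    have hp0 : Pent.pent 0 = 0 := rfl
    rw [hp0]
    simp only [Int.natAbs_zero, pow_zero, one_mul, sub_zero, pz]
    rw [if_neg (by omega), Int.toNat_natCast]
  rw [hsA, hsC, h0] at hkey
  have hptw : ∀ k ∈ Finset.Icc 1 n,
      (-1 : ℤ) ^ (k + 1) *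
          (pz ((n : ℤ) - k * (3 * k - 1) / 2) + pz ((n : ℤ) - k * (3 * k + 1) / 2))
        = -((-1:ℤ)^k * pz ((n:ℤ) - (k:ℤ) * (3*(k:ℤ)-1)/2))
          + -((-1:ℤ)^k * pz ((n:ℤ) - (k:ℤ) * (3*(k:ℤ)+1)/2)) := by
    intro k hk
    rw [pow_succ]
    ring
  rw [Finset.sum_congr rfl hptw, Finset.sum_add_distrib,
    Finset.sum_neg_distrib, Finset.sum_neg_distrib]
  linarith [hkey]
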